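/- For any two pure states Φᵢ = |φᵢ⟩⟨φᵢ|, Φⱼ = |φⱼ⟩⟨φⱼ| and real numbers qᵢ, qⱼ ∈ [0,1], the inequality (‖qᵢΦᵢ − (1−qⱼ)Φⱼ‖_tr + ‖(1−qᵢ)Φᵢ − qⱼΦⱼ‖_tr)² ≥ ‖Φᵢ − Φⱼ‖_tr² + (qᵢ + qⱼ − 1)² tr(ΦᵢΦⱼ) holds. -/

import Mathlib

open Matrix Kronecker BigOperators
open scoped ComplexOrder

/-- Trace distance/norm with factor 1/2: `‖A‖ = ½ tr √(AᴴA)`. -/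
noncomputable def trNorm {m : Type*} [Fintype m] [DecidableEq m] (A : Matrix m m ℂ) : ℝ :=
  (1 / 2) * (((Matrix.posSemidef_conjTranspose_mul_self A).isHermitian.eigenvectorUnitary.1 *
    diagonal (((↑) : ℝ → ℂ) ∘ (√·) ∘ (Matrix.posSemidef_conjTranspose_mul_self A).isHermitian.eigenvalues) *
    (star (Matrix.posSemidef_conjTranspose_mul_self A).isHermitian.eigenvectorUnitary : Matrix m m ℂ)).trace).re

/-- A density operator: positive semidefinite with unit trace. -/
def IsDensity {m : Type*} [Fintype m] (ρ : Matrix m m ℂ) : Prop :=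
  ρ.PosSemidef ∧ ρ.trace = 1

/-- A pure state: a density operator that is a (rank-one) projector. -/
def IsPureState {m : Type*} [Fintype m] (ρ : Matrix m m ℂ) : Prop :=
  IsDensity ρ ∧ ρ * ρ = ρ

/-- Completely positive trace-preserving map, via a Kraus representation. -/
def IsCPTP {m p : Type*} [Fintype m] [DecidableEq m] [Fintype p]
    (Λ : Matrix m m ℂ →ₗ[ℂ] Matrix p p ℂ) : Prop :=
  ∃ (ι : Type) (s : Finset ι) (K : ι → Matrix p m ℂ),
    (∀ ρ, Λ ρ = ∑ i ∈ s, K i * ρ * (K i)ᴴ) ∧ ∑ i ∈ s, (K i)ᴴ * K i = 1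

/-- Partial trace over the second (auxiliary) tensor factor. -/
noncomputable def ptraceB {m b : Type*} [Fintype b] (ρ : Matrix (m × b) (m × b) ℂ) :
    Matrix m m ℂ :=
  Matrix.of fun i j => ∑ k : b, ρ (i, k) (j, k)

/-- The projector `|χ⟩⟨χ|` onto the vector `χ`. -/
noncomputable def pureProj {m : Type*} (χ : m → ℂ) : Matrix m m ℂ :=
  Matrix.vecMulVec χ (star χ)

/-- `χ` lies in the range of `ρ`. -/
def inRange {m : Type*} [Fintype m] (ρ : Matrix m m ℂ) (χ : m → ℂ) : Prop :=
  ∃ v, ρ *ᵥ v = χ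

/-- Worst-case distinguishability: infimum of trace distances of pure states
taken from the ranges of `ρ` and `ρ'`. -/
noncomputable def wcd {m : Type*} [Fintype m] [DecidableEq m] (ρ ρ' : Matrix m m ℂ) : ℝ :=
  sInf { d : ℝ | ∃ χ χ' : m → ℂ, inRange ρ χ ∧ inRange ρ' χ' ∧
    star χ ⬝ᵥ χ = 1 ∧ star χ' ⬝ᵥ χ' = 1 ∧ d = trNorm (pureProj χ - pureProj χ') }

namespace DTNAux

variable {n : Type*} [Fintype n] [DecidableEq n]

lemma ofReal_comp : (RCLike.ofReal : ℝ → ℂ) = Complex.ofReal := rfl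

lemma trace_conj_diag (U : Matrix n n ℂ) (hU : star U * U = 1) (d : n → ℂ) :
    (U * Matrix.diagonal d * star U).trace = ∑ i, d i := by
  rw [Matrix.trace_mul_cycle, hU, Matrix.one_mul, Matrix.trace_diagonal]

lemma conj_mul_eq (U : Matrix n n ℂ) (hU2 : U * star U = 1) (X Y : Matrix n n ℂ) :
    star U * (X * Y) * U = (star U * X * U) * (star U * Y * U) := by
  rw [show (star U * X * U) * (star U * Y * U)
      = star U * (X * ((U * star U) * (Y * U))) from by simp only [Matrix.mul_assoc],
    hU2, Matrix.one_mul]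
  simp only [Matrix.mul_assoc]

lemma unconj (U : Matrix n n ℂ) (hU2 : U * star U = 1) {X Y : Matrix n n ℂ}
    (h : star U * X * U = Y) : X = U * Y * star U := by
  rw [← h]
  simp only [← Matrix.mul_assoc, hU2, Matrix.one_mul]
  rw [Matrix.mul_assoc, hU2, Matrix.mul_one]

lemma psd_sq_unique {B C X : Matrix n n ℂ} (hB : B.PosSemidef) (hC : C.PosSemidef)
    (hB2 : B * B = X) (hC2 : C * C = X) : B = C := by
  open scoped MatrixOrder in
  have h1 := CFC.sqrt_unique (a := X) hB2 hB.nonneg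
  open scoped MatrixOrder in
  have h2 := CFC.sqrt_unique (a := X) hC2 hC.nonneg
  rw [← h1, ← h2]

section herm
variable {A : Matrix n n ℂ} (hA : A.IsHermitian)

lemma star_mul_self_mul_eq_diagonal' :
    star (hA.eigenvectorUnitary : Matrix n n ℂ) * A * (hA.eigenvectorUnitary : Matrix n n ℂ)
      = Matrix.diagonal (RCLike.ofReal ∘ hA.eigenvalues) := by
  have := hA.conjStarAlgAut_star_eigenvectorUnitary
  rwa [Unitary.conjStarAlgAut_star_apply] at this

lemma hU1' : star (hA.eigenvectorUnitary : Matrix n n ℂ) * (hA.eigenvectorUnitary : Matrix n n ℂ) = 1 := by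
  simp

lemma hU2' : (hA.eigenvectorUnitary : Matrix n n ℂ) * star (hA.eigenvectorUnitary : Matrix n n ℂ) = 1 := by
  simp

lemma trNorm_hermitian : trNorm A = (1/2) * ∑ i, |hA.eigenvalues i| := by
  set U : Matrix n n ℂ := (hA.eigenvectorUnitary : Matrix n n ℂ) with hUdef
  have hU1 : star U * U = 1 := hU1' hA
  have hU2 : U * star U = 1 := hU2' hA
  set B : Matrix n n ℂ := U * Matrix.diagonal (fun i => ((|hA.eigenvalues i| : ℝ) : ℂ)) * star U with hBdef
  have hBpsd : B.PosSemidef := by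
    have hd : Matrix.PosSemidef (Matrix.diagonal (fun i => ((|hA.eigenvalues i| : ℝ) : ℂ))) := by
      refine Matrix.PosSemidef.diagonal fun i => ?_
      exact Complex.zero_le_real.mpr (abs_nonneg (hA.eigenvalues i))
    rw [hBdef]
    simpa [Matrix.star_eq_conjTranspose] using hd.mul_mul_conjTranspose_same U
  have habs : Matrix.diagonal (fun i => ((|hA.eigenvalues i| : ℝ) : ℂ)) *
      Matrix.diagonal (fun i => ((|hA.eigenvalues i| : ℝ) : ℂ)) =
      Matrix.diagonal (Complex.ofReal ∘ hA.eigenvalues) *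
      Matrix.diagonal (Complex.ofReal ∘ hA.eigenvalues) := by
    simp only [Matrix.diagonal_mul_diagonal, Function.comp]
    congr 1
    ext i
    simp [← Complex.ofReal_mul, abs_mul_abs_self]
  have hB2 : B ^ 2 = Aᴴ * A := by
    have hspec := hA.spectral_theorem
    rw [pow_two, hA.eq]
    conv_rhs => rw [hspec]
    rw [hBdef]
    rw [ofReal_comp] at hspec ⊢
    calc (U * Matrix.diagonal (fun i => ((|hA.eigenvalues i| : ℝ) : ℂ)) * star U) *
        (U * Matrix.diagonal (fun i => ((|hA.eigenvalues i| : ℝ) : ℂ)) * star U)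
        = U * (Matrix.diagonal (fun i => ((|hA.eigenvalues i| : ℝ) : ℂ)) * (star U * U) *
            Matrix.diagonal (fun i => ((|hA.eigenvalues i| : ℝ) : ℂ))) * star U := by
          simp only [Matrix.mul_assoc]
      _ = U * (Matrix.diagonal (Complex.ofReal ∘ hA.eigenvalues) * (star U * U) *
            Matrix.diagonal (Complex.ofReal ∘ hA.eigenvalues)) * star U := by
          rw [hU1]
          simp only [Matrix.mul_one]
          rw [habs]
      _ = (U * Matrix.diagonal (Complex.ofReal ∘ hA.eigenvalues) * star U) *
          (U * Matrix.diagonal (Complex.ofReal ∘ hA.eigenvalues) * star U) := by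
          simp only [Matrix.mul_assoc]
  have hP := (Matrix.posSemidef_conjTranspose_mul_self A)
  set V : Matrix n n ℂ := (hP.isHermitian.eigenvectorUnitary : Matrix n n ℂ) with hVdef
  have hV1 : star V * V = 1 := hU1' hP.isHermitian
  have hEpsd : (V * diagonal (((↑) : ℝ → ℂ) ∘ (√·) ∘ hP.isHermitian.eigenvalues) * star V).PosSemidef := by
    have hd : Matrix.PosSemidef (diagonal (((↑) : ℝ → ℂ) ∘ (√·) ∘ hP.isHermitian.eigenvalues)) := by
      refine Matrix.PosSemidef.diagonal fun i => ?_
      exact Complex.zero_le_real.mpr (Real.sqrt_nonneg _)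
    simpa [Matrix.star_eq_conjTranspose] using hd.mul_mul_conjTranspose_same V
  have hE2 : (V * diagonal (((↑) : ℝ → ℂ) ∘ (√·) ∘ hP.isHermitian.eigenvalues) * star V) *
      (V * diagonal (((↑) : ℝ → ℂ) ∘ (√·) ∘ hP.isHermitian.eigenvalues) * star V) = Aᴴ * A := by
    have hspec := hP.isHermitian.spectral_theorem
    rw [Unitary.conjStarAlgAut_apply] at hspec
    conv_rhs => rw [hspec]
    rw [show (V * diagonal (((↑) : ℝ → ℂ) ∘ (√·) ∘ hP.isHermitian.eigenvalues) * star V) *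
        (V * diagonal (((↑) : ℝ → ℂ) ∘ (√·) ∘ hP.isHermitian.eigenvalues) * star V)
        = V * (diagonal (((↑) : ℝ → ℂ) ∘ (√·) ∘ hP.isHermitian.eigenvalues) * (star V * V) *
          diagonal (((↑) : ℝ → ℂ) ∘ (√·) ∘ hP.isHermitian.eigenvalues)) * star V from by
        simp only [Matrix.mul_assoc], hV1, Matrix.mul_one, Matrix.diagonal_mul_diagonal]
    congr 3
    ext i
    simp only [Function.comp_apply]
    rw [← Complex.ofReal_mul, Real.mul_self_sqrt (hP.eigenvalues_nonneg i)]
    rfl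
  have hsqrt := psd_sq_unique hEpsd hBpsd hE2 (by rw [← pow_two]; exact hB2)
  unfold trNorm
  rw [hsqrt, hBdef, trace_conj_diag _ hU1]
  rw [Complex.re_sum]
  simp [Complex.ofReal_re]

lemma trace_eq_sum_eigs : A.trace = ∑ i, ((hA.eigenvalues i : ℝ) : ℂ) := by
  conv_lhs => rw [hA.spectral_theorem]
  rw [Unitary.conjStarAlgAut_apply, trace_conj_diag _ (hU1' hA)]
  rfl

lemma conj_sq : star (hA.eigenvectorUnitary : Matrix n n ℂ) * (A * A) * (hA.eigenvectorUnitary : Matrix n n ℂ)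
    = Matrix.diagonal (fun i => ((hA.eigenvalues i : ℝ) : ℂ) ^ 2) := by
  rw [conj_mul_eq _ (hU2' hA), star_mul_self_mul_eq_diagonal' hA, Matrix.diagonal_mul_diagonal]
  congr 1
  ext i
  simp [sq]

lemma trace_sq_eq_sum_eigs : (A * A).trace = ∑ i, ((hA.eigenvalues i : ℝ) : ℂ) ^ 2 := by
  rw [unconj _ (hU2' hA) (conj_sq hA), trace_conj_diag _ (hU1' hA)]

lemma eigen_cubic (c d : ℝ)
    (h3 : A * A * A = ((c : ℂ)) • (A * A) + ((d : ℂ)) • A) (i : n) :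
    hA.eigenvalues i ^ 3 = c * hA.eigenvalues i ^ 2 + d * hA.eigenvalues i := by
  set U : Matrix n n ℂ := (hA.eigenvectorUnitary : Matrix n n ℂ)
  have hdiag := star_mul_self_mul_eq_diagonal' hA
  have hcube : star U * (A * A * A) * U
      = Matrix.diagonal (fun i => ((hA.eigenvalues i : ℝ) : ℂ) ^ 3) := by
    rw [conj_mul_eq _ (hU2' hA) (A * A) A, conj_sq hA, hdiag, Matrix.diagonal_mul_diagonal]
    congr 1
  have hrhs : star U * (((c : ℂ)) • (A * A) + ((d : ℂ)) • A) * U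
      = (c : ℂ) • Matrix.diagonal (fun i => ((hA.eigenvalues i : ℝ) : ℂ) ^ 2)
        + (d : ℂ) • Matrix.diagonal (fun i => ((hA.eigenvalues i : ℝ) : ℂ)) := by
    rw [Matrix.mul_add, Matrix.add_mul, Matrix.mul_smul, Matrix.smul_mul, Matrix.mul_smul,
      Matrix.smul_mul, conj_sq hA, hdiag]
    rfl
  rw [h3, hrhs] at hcube
  have h := congrArg (fun M => M i i) hcube.symm
  simp only [Matrix.add_apply, Matrix.smul_apply, Matrix.diagonal_apply_eq, smul_eq_mul] at h
  exact_mod_cast h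

end herm

lemma pure_conj {Φ : Matrix n n ℂ} (h : IsPureState Φ) (X : Matrix n n ℂ) :
    Φ * X * Φ = (Φ * X).trace • Φ := by
  obtain ⟨⟨hpsd, htr⟩, hidem⟩ := h
  have hH : Φ.IsHermitian := hpsd.1
  set U : Matrix n n ℂ := (hH.eigenvectorUnitary : Matrix n n ℂ) with hUdef
  have hU1 : star U * U = 1 := hU1' hH
  have hU2 : U * star U = 1 := hU2' hH
  have hdiag := star_mul_self_mul_eq_diagonal' hH
  have hsq : ∀ i, hH.eigenvalues i * hH.eigenvalues i = hH.eigenvalues i := by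
    intro i
    have h2 : star U * (Φ * Φ) * U = star U * Φ * U := by rw [hidem]
    rw [conj_mul_eq _ hU2, hdiag, Matrix.diagonal_mul_diagonal] at h2
    have := congrArg (fun M => M i i) h2
    simp only [Matrix.diagonal_apply_eq, Function.comp_apply] at this
    exact_mod_cast this
  have h01 : ∀ i, hH.eigenvalues i = 0 ∨ hH.eigenvalues i = 1 := by
    intro i
    rcases mul_eq_zero.mp (show hH.eigenvalues i * (hH.eigenvalues i - 1) = 0 by
      nlinarith [hsq i]) with h | h
    · exact Or.inl h
    · right; linarith
  have hsum : ∑ i, hH.eigenvalues i = 1 := by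
    have : Φ.trace = ∑ i, ((hH.eigenvalues i : ℝ) : ℂ) := trace_eq_sum_eigs hH
    rw [htr] at this
    exact_mod_cast this.symm
  have hcard : (Finset.univ.filter (fun i => hH.eigenvalues i = 1)).card = 1 := by
    have : ∑ i, hH.eigenvalues i
        = ((Finset.univ.filter (fun i => hH.eigenvalues i = 1)).card : ℝ) := by
      rw [Finset.card_filter]
      push_cast
      refine Finset.sum_congr rfl fun i _ => ?_
      rcases h01 i with h | h <;> simp [h]
    rw [hsum] at this
    exact_mod_cast this.symm
  obtain ⟨k, hk⟩ := Finset.card_eq_one.mp hcard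
  have hμk : ∀ i, hH.eigenvalues i = if i = k then 1 else 0 := by
    intro i
    by_cases hik : i = k
    · subst hik
      simp only [if_pos rfl]
      have : i ∈ Finset.univ.filter (fun j => hH.eigenvalues j = 1) := by
        rw [hk]; exact Finset.mem_singleton_self i
      simpa using this
    · rw [if_neg hik]
      rcases h01 i with h | h
      · exact h
      · exfalso
        have : i ∈ Finset.univ.filter (fun j => hH.eigenvalues j = 1) := by simp [h]
        rw [hk] at this
        exact hik (Finset.mem_singleton.mp this)
  set d : n → ℂ := fun i => if i = k then 1 else 0 with hddef
  have hdiag' : star U * Φ * U = Matrix.diagonal d := by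
    rw [hdiag]
    refine congrArg Matrix.diagonal (funext fun i => ?_)
    simp only [Function.comp_apply, hddef]
    split <;> rename_i hh <;> simp [hμk, hh]
  have hspec : Φ = U * Matrix.diagonal d * star U := by
    rw [← hdiag']
    simp only [← Matrix.mul_assoc, hU2, Matrix.one_mul]
    rw [Matrix.mul_assoc, hU2, Matrix.mul_one]
  have hsand : ∀ M : Matrix n n ℂ,
      Matrix.diagonal d * M * Matrix.diagonal d = (M k k) • Matrix.diagonal d := by
    intro M
    ext i j
    rw [Matrix.mul_diagonal, Matrix.diagonal_mul, Matrix.smul_apply]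
    by_cases hik : i = k <;> by_cases hjk : j = k <;>
      simp [Matrix.diagonal_apply, hddef, hik, hjk, Ne.symm]
  have htrace : (Φ * X).trace = (star U * X * U) k k := by
    conv_lhs => rw [hspec]
    rw [Matrix.trace_mul_comm, ← Matrix.mul_assoc, ← Matrix.mul_assoc, Matrix.trace_mul_comm,
      ← Matrix.mul_assoc]
    rw [Matrix.trace_mul_comm]
    rw [show Matrix.diagonal d * (star U * (X * U)) = Matrix.diagonal d * (star U * X * U) from by
      simp only [Matrix.mul_assoc]]
    rw [Matrix.trace]
    simp [Matrix.diag, Matrix.diagonal_mul, hddef, Finset.sum_ite_eq']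
  conv_lhs => rw [hspec]
  rw [htrace]
  calc (U * Matrix.diagonal d * star U) * X * (U * Matrix.diagonal d * star U)
      = U * (Matrix.diagonal d * (star U * X * U) * Matrix.diagonal d) * star U := by
        simp only [Matrix.mul_assoc]
    _ = U * (((star U * X * U) k k) • Matrix.diagonal d) * star U := by rw [hsand]
    _ = ((star U * X * U) k k) • (U * Matrix.diagonal d * star U) := by
        rw [Matrix.mul_smul, Matrix.smul_mul]
    _ = ((star U * X * U) k k) • Φ := by rw [← hspec]

lemma cube_identity (M N : Matrix n n ℂ) (τ a b : ℂ) (hM : M * M = M) (hN : N * N = N)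
    (hMNM : M * (N * M) = τ • M) (hNMN : N * (M * N) = τ • N) :
    (a • M - b • N) * (a • M - b • N) * (a • M - b • N)
      = (a - b) • ((a • M - b • N) * (a • M - b • N)) + (a * b * (1 - τ)) • (a • M - b • N) := by
  simp only [Matrix.sub_mul, Matrix.mul_sub, Matrix.smul_mul, Matrix.mul_smul, Matrix.mul_assoc,
    hM, hN, hMNM, hNMN, smul_smul, smul_sub, sub_smul, smul_add, add_smul]
  module

lemma trace_nonneg_of_psd {M : Matrix n n ℂ} (hM : M.PosSemidef) : 0 ≤ M.trace := by
  rw [Matrix.trace]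
  apply Finset.sum_nonneg
  intro i _
  exact hM.diag_nonneg

lemma final_ineq (qi qj t : ℝ) (hqi0 : 0 ≤ qi) (hqi1 : qi ≤ 1) (hqj0 : 0 ≤ qj)
    (hqj1 : qj ≤ 1) (ht0 : 0 ≤ t) (ht1 : t ≤ 1) :
    (1 - t) + (qi + qj - 1)^2 * t ≤
      (Real.sqrt ((qi - (1 - qj))^2 + 4*(qi*(1-qj)*(1-t)))/2
        + Real.sqrt (((1 - qi) - qj)^2 + 4*((1-qi)*qj*(1-t)))/2)^2 := by
  have hA : (0:ℝ) ≤ qi*(1-qj) := mul_nonneg hqi0 (by linarith)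
  have hB : (0:ℝ) ≤ (1-qi)*qj := mul_nonneg (by linarith) hqj0
  have hc0 : (0:ℝ) ≤ 1 - t := by linarith
  have hargX : 0 ≤ (qi - (1 - qj))^2 + 4*(qi*(1-qj)*(1-t)) := by positivity
  have hargY : 0 ≤ ((1 - qi) - qj)^2 + 4*((1-qi)*qj*(1-t)) := by positivity
  set X := Real.sqrt ((qi - (1 - qj))^2 + 4*(qi*(1-qj)*(1-t))) with hXd
  set Y := Real.sqrt (((1 - qi) - qj)^2 + 4*((1-qi)*qj*(1-t))) with hYd
  have hX2 : X^2 = (qi - (1 - qj))^2 + 4*(qi*(1-qj)*(1-t)) := Real.sq_sqrt hargX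
  have hY2 : Y^2 = ((1 - qi) - qj)^2 + 4*((1-qi)*qj*(1-t)) := Real.sq_sqrt hargY
  have hX0 : 0 ≤ X := Real.sqrt_nonneg _
  have hY0 : 0 ≤ Y := Real.sqrt_nonneg _
  have key : (qi+qj-1)^2 + 2*(1-t)*((qi+qj) - (qi+qj)^2 + 2*(qi*qj)) ≤ X*Y := by
    rcases le_or_gt ((qi+qj-1)^2 + 2*(1-t)*((qi+qj) - (qi+qj)^2 + 2*(qi*qj))) 0 with h | h
    · exact h.trans (mul_nonneg hX0 hY0)
    · have hid : X^2*Y^2 - ((qi+qj-1)^2 + 2*(1-t)*((qi+qj) - (qi+qj)^2 + 2*(qi*qj)))^2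
          = 4*((1-t)*t)*((qi+qj-1)^2*(qi-qj)^2) := by
        rw [hX2, hY2]; ring
      nlinarith [sq_nonneg (X*Y - ((qi+qj-1)^2 + 2*(1-t)*((qi+qj) - (qi+qj)^2 + 2*(qi*qj)))),
        mul_nonneg hX0 hY0,
        mul_nonneg (mul_nonneg hc0 ht0) (mul_nonneg (sq_nonneg (qi+qj-1)) (sq_nonneg (qi-qj)))]
  nlinarith [key, hX2, hY2, hX0, hY0]

section pure
variable {Φi Φj : Matrix n n ℂ}

lemma tau_real (hi : IsPureState Φi) (hj : IsPureState Φj) : (Φi * Φj).trace = ((((Φi * Φj).trace).re : ℝ) : ℂ)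
    ∧ 0 ≤ ((Φi * Φj).trace).re ∧ ((Φi * Φj).trace).re ≤ 1 := by
  have hiH : Φi.IsHermitian := hi.1.1.1
  have hjH : Φj.IsHermitian := hj.1.1.1
  have hnn : 0 ≤ (Φi * Φj).trace := by
    have hpsd := Matrix.posSemidef_conjTranspose_mul_self (Φj * Φi)
    have h := trace_nonneg_of_psd hpsd
    have heq : (Φj * Φi)ᴴ * (Φj * Φi) = Φi * (Φj * Φi) := by
      rw [Matrix.conjTranspose_mul, hiH.eq, hjH.eq]
      rw [show Φi * Φj * (Φj * Φi) = Φi * ((Φj * Φj) * Φi) from by simp only [Matrix.mul_assoc],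
        hj.2]
    rw [heq] at h
    have htr : (Φi * (Φj * Φi)).trace = (Φi * Φj).trace := by
      rw [← Matrix.mul_assoc, Matrix.trace_mul_comm, ← Matrix.mul_assoc, hi.2]
    rwa [htr] at h
  have him : ((Φi * Φj).trace).im = 0 := ((Complex.le_def.mp hnn).2).symm
  have hre : 0 ≤ ((Φi * Φj).trace).re := (Complex.le_def.mp hnn).1
  refine ⟨Complex.ext (by simp) (by simp [him]), hre, ?_⟩
  -- upper bound via trace((Φi-Φj)ᴴ(Φi-Φj)) ≥ 0
  have hpsd2 := Matrix.posSemidef_conjTranspose_mul_self (Φi - Φj)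
  have h2 := trace_nonneg_of_psd hpsd2
  have heq2 : (Φi - Φj)ᴴ * (Φi - Φj) = Φi + Φj - Φi * Φj - Φj * Φi := by
    rw [Matrix.conjTranspose_sub, hiH.eq, hjH.eq, Matrix.sub_mul, Matrix.mul_sub,
      Matrix.mul_sub, hi.2, hj.2]
    abel
  rw [heq2] at h2
  have htr2 : (Φi + Φj - Φi * Φj - Φj * Φi).trace
      = 2 - (Φi * Φj).trace - (Φj * Φi).trace := by
    rw [Matrix.trace_sub, Matrix.trace_sub, Matrix.trace_add, hi.1.2, hj.1.2]
    ring
  rw [htr2, Matrix.trace_mul_comm Φj Φi] at h2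
  have := (Complex.le_def.mp h2).1
  simp at this
  linarith

lemma trNorm_formula (hi : IsPureState Φi) (hj : IsPureState Φj) (a b : ℝ) (ha : 0 ≤ a) (hb : 0 ≤ b) :
    trNorm ((a : ℂ) • Φi - (b : ℂ) • Φj)
      = Real.sqrt ((a - b)^2 + 4*(a*b*(1 - ((Φi * Φj).trace).re)))/2 := by
  obtain ⟨hτ, ht0, ht1⟩ := tau_real hi hj
  set t : ℝ := ((Φi * Φj).trace).re with htdef
  have hiH : Φi.IsHermitian := hi.1.1.1
  have hjH : Φj.IsHermitian := hj.1.1.1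
  set A : Matrix n n ℂ := (a : ℂ) • Φi - (b : ℂ) • Φj with hAdef
  have hAH : A.IsHermitian := by
    show Aᴴ = A
    rw [hAdef, Matrix.conjTranspose_sub, Matrix.conjTranspose_smul, Matrix.conjTranspose_smul,
      hiH.eq, hjH.eq]
    simp [Complex.star_def, Complex.conj_ofReal]
  have hMNM : Φi * (Φj * Φi) = ((t : ℝ) : ℂ) • Φi := by
    have h := pure_conj hi Φj
    rw [Matrix.mul_assoc] at h
    rw [h, hτ]
  have hNMN : Φj * (Φi * Φj) = ((t : ℝ) : ℂ) • Φj := by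
    have h := pure_conj hj Φi
    rw [Matrix.mul_assoc] at h
    rw [h, Matrix.trace_mul_comm, hτ]
  have h3 : A * A * A = (((a - b : ℝ) : ℂ)) • (A * A) + (((a*b*(1 - t) : ℝ) : ℂ)) • A := by
    have h := cube_identity Φi Φj ((t : ℝ) : ℂ) (a : ℂ) (b : ℂ) hi.2 hj.2 hMNM hNMN
    rw [hAdef]
    convert h using 2 <;> push_cast <;> ring
  have hcubic : ∀ i, hAH.eigenvalues i ^ 3
      = (a - b) * hAH.eigenvalues i ^ 2 + (a*b*(1 - t)) * hAH.eigenvalues i :=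
    eigen_cubic hAH _ _ h3
  have htrA : ∑ i, hAH.eigenvalues i = a - b := by
    have h1 := trace_eq_sum_eigs hAH
    have h2 : A.trace = ((a - b : ℝ) : ℂ) := by
      rw [hAdef, Matrix.trace_sub, Matrix.trace_smul, Matrix.trace_smul, hi.1.2, hj.1.2]
      simp only [smul_eq_mul]
      push_cast
      ring
    rw [h2] at h1
    exact_mod_cast h1.symm
  have htrA2 : ∑ i, hAH.eigenvalues i ^ 2 = (a - b)^2 + 2*(a*b*(1 - t)) := by
    have h1 := trace_sq_eq_sum_eigs hAH
    have hAA : A * A = (a*a : ℂ) • Φi + (b*b : ℂ) • Φj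
        - (a*b : ℂ) • (Φi * Φj) - ((a*b : ℂ)) • (Φj * Φi) := by
      rw [hAdef]
      simp only [Matrix.sub_mul, Matrix.mul_sub, Matrix.smul_mul, Matrix.mul_smul, smul_smul,
        hi.2, hj.2]
      module
    have h2 : (A * A).trace = (((a - b)^2 + 2*(a*b*(1 - t)) : ℝ) : ℂ) := by
      rw [hAA, Matrix.trace_sub, Matrix.trace_sub, Matrix.trace_add, Matrix.trace_smul,
        Matrix.trace_smul, Matrix.trace_smul, Matrix.trace_smul, hi.1.2, hj.1.2,
        Matrix.trace_mul_comm Φj Φi, hτ]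
      simp only [smul_eq_mul]
      push_cast
      ring
    rw [h2] at h1
    exact_mod_cast h1.symm
  have he : 0 ≤ a*b*(1 - t) := mul_nonneg (mul_nonneg ha hb) (by linarith)
  rw [trNorm_hermitian hAH]
  rw [show (1/2 : ℝ) * ∑ i, |hAH.eigenvalues i| = (∑ i, |hAH.eigenvalues i|)/2 from by ring]
  congr 1
  by_cases hD : (a - b)^2 + 4*(a*b*(1 - t)) = 0
  · have hu : a - b = 0 ∧ a*b*(1 - t) = 0 := by
      constructor <;> nlinarith [sq_nonneg (a - b)]
    have hz : ∀ i, hAH.eigenvalues i = 0 := by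
      intro i
      have h := hcubic i
      rw [hu.1, hu.2] at h
      have h3z : hAH.eigenvalues i ^ 3 = 0 := by linarith [h]
      exact pow_eq_zero_iff (n := 3) (by norm_num) |>.mp h3z
    rw [hD, Real.sqrt_zero]
    simp [hz]
  · have hDpos : 0 < (a - b)^2 + 4*(a*b*(1 - t)) :=
      lt_of_le_of_ne (by positivity) (Ne.symm hD)
    set D := Real.sqrt ((a - b)^2 + 4*(a*b*(1 - t))) with hDdef
    have hD0 : 0 < D := Real.sqrt_pos.mpr hDpos
    have hDsq : D^2 = (a - b)^2 + 4*(a*b*(1 - t)) := Real.sq_sqrt hDpos.le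
    have key : ∀ i, |hAH.eigenvalues i| * D
        = 2*(hAH.eigenvalues i)^2 - (a - b)*(hAH.eigenvalues i) := by
      intro i
      set μ := hAH.eigenvalues i with hμdef
      have hcub := hcubic i
      have hfac : μ * (μ^2 - (a - b)*μ - a*b*(1 - t)) = 0 := by
        rw [← hμdef] at hcub
        linear_combination hcub
      rcases mul_eq_zero.mp hfac with h0 | hq
      · rw [h0]; simp
      · have hq' : μ^2 = (a - b)*μ + a*b*(1 - t) := by linarith
        have h2 : (2*μ - (a - b))^2 = (a - b)^2 + 4*(a*b*(1 - t)) := by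
          linear_combination 4*hq'
        have hDabs : D = |2*μ - (a - b)| := by
          rw [hDdef, ← h2, Real.sqrt_sq_eq_abs]
        have hDgeu : |a - b| ≤ D := by
          rw [hDdef]
          calc |a - b| = Real.sqrt ((a - b)^2) := (Real.sqrt_sq_eq_abs _).symm
            _ ≤ _ := Real.sqrt_le_sqrt (by linarith)
        rcases abs_cases (2*μ - (a - b)) with ⟨heq, hge⟩ | ⟨heq, hlt⟩
        · have hμ0 : 0 ≤ μ := by
            have h1 : D = 2*μ - (a - b) := by rw [hDabs, heq]
            have h2' := neg_abs_le (a - b)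
            linarith
          rw [abs_of_nonneg hμ0, hDabs, heq]
          ring
        · have hμ0 : μ ≤ 0 := by
            have h1 : D = -(2*μ - (a - b)) := by rw [hDabs, heq]
            have h2' := le_abs_self (a - b)
            linarith
          rw [abs_of_nonpos hμ0, hDabs, heq]
          ring
    have hsum : (∑ i, |hAH.eigenvalues i|) * D = D^2 := by
      rw [Finset.sum_mul]
      rw [show ∑ i, |hAH.eigenvalues i| * D
          = ∑ i, (2*(hAH.eigenvalues i)^2 - (a - b)*(hAH.eigenvalues i)) from
        Finset.sum_congr rfl fun i _ => key i]
      rw [Finset.sum_sub_distrib, ← Finset.mul_sum, ← Finset.mul_sum, htrA, htrA2, hDsq]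
      ring
    have h' : (∑ i, |hAH.eigenvalues i|) * D = D * D := by rw [hsum]; ring
    exact mul_right_cancel₀ (ne_of_gt hD0) h'

end pure

end DTNAux

/-- for pure states `Φᵢ, Φⱼ` and `qᵢ, qⱼ ∈ [0,1]`,
`(‖qᵢΦᵢ − (1−qⱼ)Φⱼ‖ + ‖(1−qᵢ)Φᵢ − qⱼΦⱼ‖)² ≥ ‖Φᵢ − Φⱼ‖² + (qᵢ+qⱼ−1)² tr(ΦᵢΦⱼ)`. -/
theorem discrimination_trace_norm_inequality {n : Type*} [Fintype n] [DecidableEq n]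
    (Φi Φj : Matrix n n ℂ) (hi : IsPureState Φi) (hj : IsPureState Φj)
    (qi qj : ℝ) (hqi : qi ∈ Set.Icc (0 : ℝ) 1) (hqj : qj ∈ Set.Icc (0 : ℝ) 1) :
    trNorm (Φi - Φj) ^ 2 + (qi + qj - 1) ^ 2 * ((Φi * Φj).trace).re
      ≤ (trNorm ((qi : ℂ) • Φi - ((1 - qj : ℝ) : ℂ) • Φj)
          + trNorm (((1 - qi : ℝ) : ℂ) • Φi - (qj : ℂ) • Φj)) ^ 2 := by
  obtain ⟨hqi0, hqi1⟩ := hqi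
  obtain ⟨hqj0, hqj1⟩ := hqj
  obtain ⟨hτ, ht0, ht1⟩ := DTNAux.tau_real hi hj
  set t : ℝ := ((Φi * Φj).trace).re with htdef
  have hT : trNorm (Φi - Φj) = Real.sqrt ((1 - 1)^2 + 4*(1*1*(1 - t)))/2 := by
    have h := DTNAux.trNorm_formula hi hj 1 1 zero_le_one zero_le_one
    rw [show ((1:ℝ) : ℂ) • Φi = Φi from by norm_num,
        show ((1:ℝ) : ℂ) • Φj = Φj from by norm_num] at h
    exact h
  have hTsq : trNorm (Φi - Φj) ^ 2 = 1 - t := by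
    rw [hT, div_pow, Real.sq_sqrt (by nlinarith)]
    ring
  have hN1 : trNorm ((qi : ℂ) • Φi - ((1 - qj : ℝ) : ℂ) • Φj)
      = Real.sqrt ((qi - (1 - qj))^2 + 4*(qi*(1-qj)*(1-t)))/2 :=
    DTNAux.trNorm_formula hi hj qi (1 - qj) hqi0 (by linarith)
  have hN2 : trNorm (((1 - qi : ℝ) : ℂ) • Φi - (qj : ℂ) • Φj)
      = Real.sqrt (((1 - qi) - qj)^2 + 4*((1-qi)*qj*(1-t)))/2 :=
    DTNAux.trNorm_formula hi hj (1 - qi) qj (by linarith) hqj0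
  rw [hTsq, hN1, hN2]
  exact DTNAux.final_ineq qi qj t hqi0 hqi1 hqj0 hqj1 ht0 ht1
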